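/- For a row-stochastic matrix C, ι(C) = k (i.e., the largest identity matrix ultraweakly majorized by C is I_k) if and only if the maximal number of pairwise orthogonal rows of C is k. -/

import Mathlib

open Matrix BigOperators

def RowStochastic {a b : ℕ} (M : Matrix (Fin a) (Fin b) ℝ) : Prop :=
  (∀ i j, 0 ≤ M i j) ∧ ∀ i, ∑ j, M i j = 1

def UW {a b c d : ℕ} (C : Matrix (Fin a) (Fin b) ℝ) (D : Matrix (Fin c) (Fin d) ℝ) : Prop :=
  ∃ (L : Matrix (Fin a) (Fin c) ℝ) (R : Matrix (Fin d) (Fin b) ℝ),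
    RowStochastic L ∧ RowStochastic R ∧ C = L * D * R
/-- ι(C): the largest k with I_k ⊑ C. -/
noncomputable def iota {n m : ℕ} (C : Matrix (Fin n) (Fin m) ℝ) : ℕ :=
  sSup {k : ℕ | UW (1 : Matrix (Fin k) (Fin k) ℝ) C}

lemma uw_to_orth {n m k : ℕ} (C : Matrix (Fin n) (Fin m) ℝ) (hC : RowStochastic C)
    (h : UW (1 : Matrix (Fin k) (Fin k) ℝ) C) :
    ∃ T : Finset (Fin n), T.card = k ∧
      (T : Set (Fin n)).Pairwise fun i i' => (C i) ⬝ᵥ (C i') = 0 := by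
  classical
  obtain ⟨L, R, hL, hR, hEq⟩ := h
  have hentry : ∀ s t : Fin k,
      ∑ j, (∑ i, L s i * C i j) * R j t = (if s = t then (1:ℝ) else 0) := by
    intro s t
    have h2 := congrFun (congrFun hEq s) t
    simpa [Matrix.mul_apply, Matrix.one_apply] using h2.symm
  -- every term is nonneg
  have hterm_nonneg : ∀ (s t : Fin k) (j : Fin m) (i : Fin n),
      0 ≤ L s i * C i j * R j t := fun s t j i =>
    mul_nonneg (mul_nonneg (hL.1 s i) (hC.1 i j)) (hR.1 j t)
  have key1 : ∀ s t : Fin k, s ≠ t → ∀ j i, L s i * C i j * R j t = 0 := by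
    intro s t hst j i
    have hsum : ∑ j, ∑ i, L s i * C i j * R j t = 0 := by
      have h := hentry s t
      rw [if_neg hst] at h
      calc ∑ j, ∑ i, L s i * C i j * R j t
          = ∑ j, (∑ i, L s i * C i j) * R j t :=
            Finset.sum_congr rfl fun j _ => (Finset.sum_mul ..).symm
        _ = 0 := h
    have hj : ∑ i, L s i * C i j * R j t = 0 := by
      have := (Finset.sum_eq_zero_iff_of_nonneg (fun j _ =>
        Finset.sum_nonneg fun i _ => hterm_nonneg s t j i)).mp hsum
      exact this j (Finset.mem_univ j)
    exact (Finset.sum_eq_zero_iff_of_nonneg (fun i _ =>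
      hterm_nonneg s t j i)).mp hj i (Finset.mem_univ i)
  have key2 : ∀ (s : Fin k) (i : Fin n), L s i ≠ 0 → ∀ j, C i j ≠ 0 → R j s = 1 := by
    intro s i hLi j hCj
    have h1 : ∑ t, R j t = 1 := hR.2 j
    have hz : ∀ t ∈ Finset.univ, t ≠ s → R j t = 0 := by
      intro t _ hts
      have := key1 s t (Ne.symm hts) j i
      have hne : L s i * C i j ≠ 0 := mul_ne_zero hLi hCj
      rcases mul_eq_zero.mp this with h' | h'
      · exact absurd h' hne
      · exact h'
    rw [← h1, Finset.sum_eq_single_of_mem s (Finset.mem_univ s) hz]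
  have key3 : ∀ (j : Fin m) (s t : Fin k), s ≠ t → R j s = 1 → R j t = 1 → False := by
    intro j s t hst h1 h2
    have hle : ∑ t' ∈ ({s, t} : Finset (Fin k)), R j t' ≤ ∑ t', R j t' :=
      Finset.sum_le_sum_of_subset_of_nonneg (Finset.subset_univ _)
        (fun t' _ _ => hR.1 j t')
    rw [Finset.sum_pair hst, h1, h2, hR.2 j] at hle
    linarith
  -- choose a nonzero entry of each row of L
  have hpick : ∀ s : Fin k, ∃ i, L s i ≠ 0 := by
    intro s
    by_contra hcon
    push_neg at hcon
    have h1 := hL.2 s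
    rw [Finset.sum_eq_zero (fun i _ => hcon i)] at h1
    exact one_ne_zero h1.symm
  set ψ : Fin k → Fin n := fun s => (hpick s).choose with hψ
  have hψne : ∀ s, L s (ψ s) ≠ 0 := fun s => (hpick s).choose_spec
  have horthψ : ∀ s t : Fin k, s ≠ t → (C (ψ s)) ⬝ᵥ (C (ψ t)) = 0 := by
    intro s t hst
    unfold dotProduct
    apply Finset.sum_eq_zero
    intro j _
    by_contra hne
    have h1 : C (ψ s) j ≠ 0 := fun h => hne (by rw [h, zero_mul])
    have h2 : C (ψ t) j ≠ 0 := fun h => hne (by rw [h, mul_zero])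
    exact key3 j s t hst (key2 s (ψ s) (hψne s) j h1) (key2 t (ψ t) (hψne t) j h2)
  have hψinj : Function.Injective ψ := by
    intro s t hψst
    by_contra hst
    obtain ⟨j, _, hj⟩ := Finset.exists_ne_zero_of_sum_ne_zero (s := Finset.univ)
      (f := fun j => C (ψ s) j) (by rw [hC.2 (ψ s)]; exact one_ne_zero)
    have h2 : C (ψ t) j ≠ 0 := by rw [← hψst]; exact hj
    exact key3 j s t hst (key2 s (ψ s) (hψne s) j hj) (key2 t (ψ t) (hψne t) j h2)
  refine ⟨Finset.image ψ Finset.univ, ?_, ?_⟩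
  · rw [Finset.card_image_of_injective _ hψinj, Finset.card_univ, Fintype.card_fin]
  · intro a ha b hb hab
    simp only [Finset.coe_image, Set.mem_image, Finset.coe_univ, Set.mem_univ] at ha hb
    obtain ⟨s, _, rfl⟩ := ha
    obtain ⟨t, _, rfl⟩ := hb
    exact horthψ s t (fun h => hab (by rw [h]))

lemma orth_to_uw {n m k : ℕ} (C : Matrix (Fin n) (Fin m) ℝ) (hC : RowStochastic C)
    (T : Finset (Fin n)) (hT : T.card = k + 1)
    (horth : (T : Set (Fin n)).Pairwise fun i i' => (C i) ⬝ᵥ (C i') = 0) :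
    UW (1 : Matrix (Fin (k+1)) (Fin (k+1)) ℝ) C := by
  classical
  set e := T.orderIsoOfFin hT with he
  set iv : Fin (k+1) → Fin n := fun s => (e s : Fin n) with hiv
  have hinj : Function.Injective iv := by
    intro s t h
    exact e.injective (Subtype.ext h)
  have hmem : ∀ s, iv s ∈ T := fun s => (e s).2
  set f : Fin m → Fin (k+1) :=
    fun j => if h : ∃ t, C (iv t) j ≠ 0 then h.choose else 0 with hf
  -- key: nonzero entries determine f
  have hfkey : ∀ (j : Fin m) (s : Fin (k+1)), C (iv s) j ≠ 0 → f j = s := by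
    intro j s hcs
    have hex : ∃ t, C (iv t) j ≠ 0 := ⟨s, hcs⟩
    simp only [hf, dif_pos hex]
    by_contra hne
    have hspec : C (iv hex.choose) j ≠ 0 := hex.choose_spec
    have hiv_ne : iv hex.choose ≠ iv s := fun h => hne (hinj h)
    have hdot := horth (hmem hex.choose) (hmem s) hiv_ne
    have := (Finset.sum_eq_zero_iff_of_nonneg (fun j' _ =>
      mul_nonneg (hC.1 _ j') (hC.1 _ j'))).mp hdot j (Finset.mem_univ j)
    exact (mul_ne_zero hspec hcs) this
  refine ⟨fun s i' => if i' = iv s then 1 else 0,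
    fun j t => if f j = t then 1 else 0, ⟨?_, ?_⟩, ⟨?_, ?_⟩, ?_⟩
  · intro s i'; dsimp only; split <;> norm_num
  · intro s; simp
  · intro j t; dsimp only; split <;> norm_num
  · intro j; simp
  · ext s t
    have hLC : ∀ j, (∑ i', (if i' = iv s then (1:ℝ) else 0) * C i' j) = C (iv s) j := by
      intro j
      rw [Finset.sum_eq_single_of_mem (iv s) (Finset.mem_univ _)]
      · simp
      · intro b _ hb; simp [hb]
    show (1 : Matrix (Fin (k+1)) (Fin (k+1)) ℝ) s t = ∑ j, (∑ i', (if i' = iv s then (1:ℝ) else 0) * C i' j) * (if f j = t then (1:ℝ) else 0)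
    simp only [Matrix.mul_apply, Matrix.one_apply, hLC]
    by_cases hst : s = t
    · subst hst
      rw [if_pos rfl]
      have : ∀ j ∈ Finset.univ, C (iv s) j * (if f j = s then (1:ℝ) else 0)
          = C (iv s) j := by
        intro j _
        by_cases h : f j = s
        · rw [if_pos h, mul_one]
        · have : C (iv s) j = 0 := by
            by_contra hc; exact h (hfkey j s hc)
          rw [this, zero_mul]
      rw [Finset.sum_congr rfl this, hC.2]
    · rw [if_neg hst]
      symm
      apply Finset.sum_eq_zero
      intro j _
      by_cases h : f j = t
      · have : C (iv s) j = 0 := by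
          by_contra hc
          exact hst ((hfkey j s hc).symm.trans h)
        rw [this, zero_mul]
      · rw [if_neg h, mul_zero]

/-- ι(C) = k iff the maximal number of pairwise orthogonal rows of C is k. -/
theorem iota_eq_iff_orthogonal_rows {n m : ℕ} (C : Matrix (Fin n) (Fin m) ℝ)
    (hC : RowStochastic C) (k : ℕ) :
    iota C = k ↔
      IsGreatest {s : ℕ | ∃ T : Finset (Fin n), T.card = s ∧
        (T : Set (Fin n)).Pairwise fun i i' => (C i) ⬝ᵥ (C i') = 0} k := by
  classical
  set S : Set ℕ := {s | ∃ T : Finset (Fin n), T.card = s ∧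
    (T : Set (Fin n)).Pairwise fun i i' => (C i) ⬝ᵥ (C i') = 0} with hS
  set A : Set ℕ := {k | UW (1 : Matrix (Fin k) (Fin k) ℝ) C} with hA
  have h0S : (0 : ℕ) ∈ S := ⟨∅, by simp, by simp⟩
  have hbddS : BddAbove S := by
    refine ⟨n, fun s hs => ?_⟩
    obtain ⟨T, hT, _⟩ := hs
    calc s = T.card := hT.symm
    _ ≤ Fintype.card (Fin n) := T.card_le_univ
    _ = n := Fintype.card_fin n
  have hAS : A ⊆ S := by
    intro j hj
    exact uw_to_orth C hC hj
  set M := sSup S with hM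
  have hMS : M ∈ S := Nat.sSup_mem ⟨0, h0S⟩ hbddS
  have hgreat : IsGreatest S M := ⟨hMS, fun s hs => le_csSup hbddS hs⟩
  have hiotaM : iota C = M := by
    show sSup A = M
    rcases Nat.eq_zero_or_pos M with hM0 | hMpos
    · have hA0 : A ⊆ {0} := by
        intro j hj
        have : j ≤ M := hgreat.2 (hAS hj)
        simp [hM0] at this
        simp [this]
      rcases Set.subset_singleton_iff_eq.mp hA0 with h | h
      · rw [h, csSup_empty]; exact hM0.symm
      · rw [h, csSup_singleton]; exact hM0.symm
    · obtain ⟨k', hk'⟩ := Nat.exists_eq_succ_of_ne_zero (Nat.pos_iff_ne_zero.mp hMpos)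
      obtain ⟨T, hT, horth⟩ := hMS
      have hMA : M ∈ A := by
        show UW (1 : Matrix (Fin M) (Fin M) ℝ) C
        rw [hk']
        exact orth_to_uw C hC T (by rw [hT]; exact hk') horth
      apply le_antisymm
      · exact csSup_le_csSup hbddS ⟨M, hMA⟩ hAS
      · exact le_csSup (hbddS.mono hAS) hMA
  rw [hiotaM]
  constructor
  · rintro rfl; exact hgreat
  · intro h; exact (h.unique hgreat).symm
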